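/- For the cross-ratio elements C_{abcd} := g_{ad}·g_{cd}⁻¹·g_{cb}·g_{ab}⁻¹ (indices pairwise distinct, with g_{ba} := −g_{ab} for a < b), one has C₁₂₃₄ = C₃₄₁₂ and C₂₁₄₃ = q²·C₁₂₃₄. -/

import Mathlib

private lemma swap_left {R : Type*} [Ring R] [Algebra ℂ R] (u : Rˣ) (a : R) (c : ℂ)
    (h : a * (u : R) = c • ((u : R) * a)) :
    (↑u⁻¹ : R) * a = c • (a * (↑u⁻¹ : R)) := by
  have := congrArg (fun x => (↑u⁻¹ : R) * x * (↑u⁻¹ : R)) h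
  simpa [mul_assoc, mul_smul_comm, smul_mul_assoc] using this

private lemma swap_right {R : Type*} [Ring R] [Algebra ℂ R] (u : Rˣ) (a : R) (c : ℂ)
    (h : (u : R) * a = c • (a * (u : R))) :
    a * (↑u⁻¹ : R) = c • ((↑u⁻¹ : R) * a) := by
  have := congrArg (fun x => (↑u⁻¹ : R) * x * (↑u⁻¹ : R)) h
  simpa [mul_assoc, mul_smul_comm, smul_mul_assoc] using this

/-- For the cross-ratio elements `C_{abcd} = g_{ad}·g_{cd}⁻¹·g_{cb}·g_{ab}⁻¹`
(with `g_{ba} = −g_{ab}`) built from invertible elements satisfying the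
commutation rules of the invariants `(ab)`, one has `C₁₂₃₄ = C₃₄₁₂` and
`C₂₁₄₃ = q²·C₁₂₃₄`. -/
theorem cross_ratio_symmetries {R : Type*} [Ring R] [Algebra ℂ R]
    (q : ℂ) (hq0 : q ≠ 0) (g12 g13 g14 g23 g24 g34 : Rˣ)
    -- rules g_bc g_ac = q² g_ac g_bc for a < b < c
    (h1 : (g23 : R) * g13 = (q ^ 2) • ((g13 : R) * g23))
    (h2 : (g24 : R) * g14 = (q ^ 2) • ((g14 : R) * g24))
    (h3 : (g34 : R) * g14 = (q ^ 2) • ((g14 : R) * g34))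
    (h4 : (g34 : R) * g24 = (q ^ 2) • ((g24 : R) * g34))
    -- rules g_ac g_ab = q² g_ab g_ac for a < b < c
    (h5 : (g13 : R) * g12 = (q ^ 2) • ((g12 : R) * g13))
    (h6 : (g14 : R) * g12 = (q ^ 2) • ((g12 : R) * g14))
    (h7 : (g14 : R) * g13 = (q ^ 2) • ((g13 : R) * g14))
    (h8 : (g24 : R) * g23 = (q ^ 2) • ((g23 : R) * g24))
    -- rules g_bc g_ab = q⁴ g_ab g_bc for a < b < c
    (h9 : (g23 : R) * g12 = (q ^ 4) • ((g12 : R) * g23))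
    (h10 : (g24 : R) * g12 = (q ^ 4) • ((g12 : R) * g24))
    (h11 : (g34 : R) * g13 = (q ^ 4) • ((g13 : R) * g34))
    (h12 : (g34 : R) * g23 = (q ^ 4) • ((g23 : R) * g34))
    -- remaining rules
    (h13 : (g34 : R) * g12 = (q ^ 6) • ((g12 : R) * g34))
    (h14 : (g23 : R) * g14 = (g14 : R) * g23)
    (h15 : (g24 : R) * g13 =
      (q ^ 4) • ((g13 : R) * g24) + (q ^ 6 - q ^ 4) • ((g12 : R) * g34)) :
    -- C₁₂₃₄ = g₁₄ g₃₄⁻¹ g₃₂ g₁₂⁻¹ with g₃₂ = −g₂₃, etc.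
    (g14 : R) * (↑g34⁻¹ : R) * (↑(-g23) : R) * (↑g12⁻¹ : R) =
        (↑(-g23) : R) * (↑g12⁻¹ : R) * (g14 : R) * (↑g34⁻¹ : R) ∧
      (g23 : R) * (↑(-g34)⁻¹ : R) * (↑(-g14) : R) * (↑(-g12)⁻¹ : R) =
        (q ^ 2) • ((g14 : R) * (↑g34⁻¹ : R) * (↑(-g23) : R) * (↑g12⁻¹ : R)) := by
  have hq4 : (q : ℂ) ^ 4 ≠ 0 := pow_ne_zero _ hq0
  have hq6 : (q : ℂ) ^ 6 ≠ 0 := pow_ne_zero _ hq0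
  -- g23 * g34⁻¹ = q⁴ • (g34⁻¹ * g23)
  have e1 : (g23 : R) * (↑g34⁻¹ : R) = (q ^ 4) • ((↑g34⁻¹ : R) * g23) :=
    swap_right g34 (g23 : R) (q ^ 4) h12
  -- g34⁻¹ * g23 = (q⁴)⁻¹ • (g23 * g34⁻¹)
  have k1 : (↑g34⁻¹ : R) * g23 = (q ^ 4)⁻¹ • ((g23 : R) * (↑g34⁻¹ : R)) := by
    rw [e1, smul_smul, inv_mul_cancel₀ hq4, one_smul]
  -- g12⁻¹ * g14 = q² • (g14 * g12⁻¹)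
  have k3 : (↑g12⁻¹ : R) * g14 = (q ^ 2) • ((g14 : R) * (↑g12⁻¹ : R)) :=
    swap_left g12 (g14 : R) (q ^ 2) h6
  -- g12 * g34⁻¹ = q⁶ • (g34⁻¹ * g12)
  have e2 : (g12 : R) * (↑g34⁻¹ : R) = (q ^ 6) • ((↑g34⁻¹ : R) * g12) :=
    swap_right g34 (g12 : R) (q ^ 6) h13
  have e3 : (↑g34⁻¹ : R) * g12 = (q ^ 6)⁻¹ • ((g12 : R) * (↑g34⁻¹ : R)) := by
    rw [e2, smul_smul, inv_mul_cancel₀ hq6, one_smul]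
  -- g12⁻¹ * g34⁻¹ = (q⁶)⁻¹ • (g34⁻¹ * g12⁻¹)
  have k4 : (↑g12⁻¹ : R) * (↑g34⁻¹ : R) = (q ^ 6)⁻¹ • ((↑g34⁻¹ : R) * (↑g12⁻¹ : R)) :=
    swap_left g12 (↑g34⁻¹ : R) ((q ^ 6)⁻¹) e3
  -- g14 * g34⁻¹ = q² • (g34⁻¹ * g14)
  have e4 : (g14 : R) * (↑g34⁻¹ : R) = (q ^ 2) • ((↑g34⁻¹ : R) * g14) :=
    swap_right g34 (g14 : R) (q ^ 2) h3
  have k5 : (↑g34⁻¹ : R) * g14 = (q ^ 2)⁻¹ • ((g14 : R) * (↑g34⁻¹ : R)) := by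
    rw [e4, smul_smul, inv_mul_cancel₀ (pow_ne_zero _ hq0), one_smul]
  -- main computation 1
  have L1 : (g14 : R) * (↑g34⁻¹ : R) * g23 * (↑g12⁻¹ : R)
      = (q ^ 4)⁻¹ • ((g23 : R) * g14 * (↑g34⁻¹ : R) * (↑g12⁻¹ : R)) := by
    rw [mul_assoc (g14 : R) (↑g34⁻¹ : R) (g23 : R), k1, mul_smul_comm, smul_mul_assoc,
      ← mul_assoc (g14 : R) (g23 : R) (↑g34⁻¹ : R), ← h14]
  have R1 : (g23 : R) * (↑g12⁻¹ : R) * g14 * (↑g34⁻¹ : R)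
      = (q ^ 4)⁻¹ • ((g23 : R) * g14 * (↑g34⁻¹ : R) * (↑g12⁻¹ : R)) := by
    rw [mul_assoc (g23 : R) (↑g12⁻¹ : R) (g14 : R), k3, mul_smul_comm, smul_mul_assoc,
      ← mul_assoc (g23 : R) (g14 : R) (↑g12⁻¹ : R),
      mul_assoc ((g23 : R) * g14) (↑g12⁻¹ : R) (↑g34⁻¹ : R), k4, mul_smul_comm, smul_smul,
      ← mul_assoc ((g23 : R) * g14) (↑g34⁻¹ : R) (↑g12⁻¹ : R)]
    congr 1
    field_simp
  have E1 : (g14 : R) * (↑g34⁻¹ : R) * g23 * (↑g12⁻¹ : R)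
      = (g23 : R) * (↑g12⁻¹ : R) * g14 * (↑g34⁻¹ : R) := L1.trans R1.symm
  -- main computation 2
  have E2 : (g23 : R) * (↑g34⁻¹ : R) * g14 * (↑g12⁻¹ : R)
      = (q ^ 2) • ((g14 : R) * (↑g34⁻¹ : R) * g23 * (↑g12⁻¹ : R)) := by
    rw [mul_assoc (g23 : R) (↑g34⁻¹ : R) (g14 : R), k5, mul_smul_comm, smul_mul_assoc,
      ← mul_assoc (g23 : R) (g14 : R) (↑g34⁻¹ : R), h14,
      mul_assoc (g14 : R) (g23 : R) (↑g34⁻¹ : R), e1, mul_smul_comm, smul_mul_assoc,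
      smul_smul, ← mul_assoc (g14 : R) (↑g34⁻¹ : R) (g23 : R)]
    congr 1
    field_simp
  constructor
  · simpa [neg_mul, mul_neg] using neg_inj.mpr E1
  · have : -((g23 : R) * (↑g34⁻¹ : R) * g14 * (↑g12⁻¹ : R))
        = (q ^ 2) • (-((g14 : R) * (↑g34⁻¹ : R) * g23 * (↑g12⁻¹ : R))) := by
      rw [smul_neg]; exact neg_inj.mpr E2
    simpa [inv_neg, neg_mul, mul_neg] using this
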